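/- Let ρ be a positive definite Hermitian n×n matrix with trace 1. Then for every Hermitian matrix v with trace 0 there exists a Hermitian matrix a such that v = (ρa + aρ)/2 − Tr(ρa)·ρ. -/

import Mathlib

open scoped ComplexOrder

/-- For a faithful quantum state `ρ` (positive definite Hermitian, trace one), every traceless
Hermitian matrix `v` can be written as `v = {ρ,a} − Tr(ρa)·ρ` for some Hermitian `a`,
where `{ρ,a} = (ρa + aρ)/2` is the Jordan product. -/
theorem jordan_identification_surjective (n : ℕ)
    (ρ : Matrix (Fin n) (Fin n) ℂ) (hρ : ρ.PosDef) (htr : ρ.trace = 1) :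
    ∀ v : Matrix (Fin n) (Fin n) ℂ, v.IsHermitian → v.trace = 0 →
      ∃ a : Matrix (Fin n) (Fin n) ℂ, a.IsHermitian ∧
        v = ((1 : ℂ) / 2) • (ρ * a + a * ρ) - (ρ * a).trace • ρ := by
  intro v hv hvtr
  set h := hρ.1 with hh
  set U : Matrix (Fin n) (Fin n) ℂ := (h.eigenvectorUnitary : Matrix (Fin n) (Fin n) ℂ) with hU
  have hUU : star U * U = 1 := Unitary.coe_star_mul_self h.eigenvectorUnitary
  have hUU' : U * star U = 1 := Unitary.coe_mul_star_self h.eigenvectorUnitary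
  set lam : Fin n → ℝ := h.eigenvalues with hlam
  have hpos : ∀ i, 0 < lam i := fun i => hρ.eigenvalues_pos i
  set w : Matrix (Fin n) (Fin n) ℂ := star U * v * U with hw
  set M : Matrix (Fin n) (Fin n) ℂ := Matrix.of fun i j => 2 * w i j / ((lam i : ℂ) + lam j) with hM
  set a : Matrix (Fin n) (Fin n) ℂ := U * M * star U with ha
  have hvstar : star v = v := hv
  have hwherm : star w = w := by
    rw [hw]
    simp [Matrix.star_mul, hvstar, mul_assoc]
  have hMherm : M.IsHermitian := by
    ext i j
    have hthis := congrFun (congrFun hwherm i) j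
    simp only [Matrix.star_apply] at hthis
    rw [Matrix.conjTranspose_apply]
    simp only [hM, Matrix.of_apply, star_div₀, star_mul', star_ofNat, star_add]
    rw [hthis]
    push_cast
    simp [Complex.star_def, Complex.conj_ofReal, add_comm]
  have hMs : star M = M := hMherm
  have haherm : a.IsHermitian := by
    show star a = a
    rw [ha]
    simp [Matrix.star_mul, star_star, hMs, mul_assoc]
  have hne : ∀ i j : Fin n, ((lam i : ℂ) + lam j) ≠ 0 := by
    intro i j
    have : (0:ℝ) < lam i + lam j := add_pos (hpos i) (hpos j)
    exact_mod_cast ne_of_gt (by exact_mod_cast this : (0:ℂ) < ((lam i + lam j : ℝ) : ℂ))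
  set D : Matrix (Fin n) (Fin n) ℂ := Matrix.diagonal (RCLike.ofReal ∘ lam) with hD
  have hspec : ρ = U * D * star U := h.spectral_theorem
  have hkey : D * M + M * D = (2:ℂ) • w := by
    ext i j
    simp only [Matrix.add_apply, Matrix.diagonal_mul, Matrix.mul_diagonal, Matrix.smul_apply,
      hM, Matrix.of_apply, Function.comp_apply, hD]
    have hs := hne i j
    rw [smul_eq_mul]
    field_simp
    ring_nf
    rfl
  have heq : ρ * a + a * ρ = (2:ℂ) • v := by
    have h1 : ρ * a = U * (D * M) * star U := by
      rw [hspec, ha]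
      rw [show U * D * star U * (U * M * star U) = U * D * (star U * U) * M * star U by
        noncomm_ring]
      rw [hUU, mul_one, mul_assoc U D M]
    have h2 : a * ρ = U * (M * D) * star U := by
      rw [hspec, ha]
      rw [show U * M * star U * (U * D * star U) = U * M * (star U * U) * D * star U by
        noncomm_ring]
      rw [hUU, mul_one, mul_assoc U M D]
    rw [h1, h2, ← Matrix.add_mul, ← Matrix.mul_add, hkey]
    rw [Matrix.mul_smul, Matrix.smul_mul, hw]
    rw [show U * (star U * v * U) * star U = (U * star U) * v * (U * star U) by noncomm_ring]
    rw [hUU', one_mul, mul_one]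
  have htrace : (ρ * a).trace = 0 := by
    have : (ρ * a + a * ρ).trace = (2:ℂ) * (ρ * a).trace := by
      rw [Matrix.trace_add, Matrix.trace_mul_comm a ρ]; ring
    rw [heq] at this
    rw [Matrix.trace_smul, hvtr] at this
    simpa using this.symm
  refine ⟨a, haherm, ?_⟩
  rw [htrace, zero_smul, sub_zero, heq]
  rw [smul_smul]
  norm_num
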